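/- arXiv:1803.06039 — 3 statements merged into one kernel-verified Lean document; each statement's English description precedes it below -/
import Mathlib

section
/- Let σ, σ' ∈ S_N and suppose there exists an index j* with σ(j*) = j* but σ'(j*) ≠ j*. Then there exists Y ∈ 𝔸 (N distinct points in ℝ³) such that V_σ(Y) ≠ V_{σ'}(Y). -/
lemma abs_coord_le_norm {n : ℕ} (x : EuclideanSpace ℝ (Fin n)) (i : Fin n) :
    |x i| ≤ ‖x‖ := by
  rw [EuclideanSpace.norm_eq]
  rw [← Real.sqrt_sq_eq_abs (x i)]
  apply Real.sqrt_le_sqrt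
  simp only [Real.norm_eq_abs, sq_abs]
  exact Finset.single_le_sum (f := fun j => x j ^ 2) (fun j _ => sq_nonneg _) (Finset.mem_univ i)

/-- If σ fixes some index j* while σ' does not, then there is an N-tuple Y of
distinct points in ℝ³ with V_σ(Y) ≠ V_{σ'}(Y). -/
theorem exists_V_ne_of_fixed_point_mismatch (N : ℕ) (σ σ' : Equiv.Perm (Fin N))
    (j' : Fin N) (hσ : σ j' = j') (hσ' : σ' j' ≠ j') :
    ∃ Y : Fin N → EuclideanSpace ℝ (Fin 3), Function.Injective Y ∧
      ∑ j, ‖Y j - Y (σ j)‖ ≠ ∑ j, ‖Y j - Y (σ' j)‖ := by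
  classical
  -- base points on the x-axis
  let base : Fin N → EuclideanSpace ℝ (Fin 3) := fun j => EuclideanSpace.single 0 (j : ℝ)
  -- constant: value of V_σ for any placement of Y j'
  set C : ℝ := ∑ j, ‖base j - base (σ j)‖ with hC
  set t : ℝ := C + N + 1 with ht
  let v : EuclideanSpace ℝ (Fin 3) := EuclideanSpace.single 0 t + EuclideanSpace.single 1 1
  let Y : Fin N → EuclideanSpace ℝ (Fin 3) := fun j => if j = j' then v else base j
  have hYj' : Y j' = v := if_pos rfl
  have hv1 : v 1 = 1 := by
    simp [v, EuclideanSpace.single_apply]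
  have hbase1 : ∀ j, base j 1 = 0 := by
    intro j; simp [base, EuclideanSpace.single_apply]
  have hvne : ∀ j, v ≠ base j := by
    intro j h
    have := congrArg (fun x : EuclideanSpace ℝ (Fin 3) => x 1) h
    simp only [hv1, hbase1] at this
    exact one_ne_zero this
  have hbaseinj : Function.Injective base := by
    intro a b h
    have := congrArg (fun x : EuclideanSpace ℝ (Fin 3) => x 0) h
    simp only [base, EuclideanSpace.single_apply, if_pos rfl] at this
    exact Fin.ext (by exact_mod_cast this)
  refine ⟨Y, ?_, ?_⟩
  · intro a b h
    simp only [Y] at h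
    by_cases ha : a = j' <;> by_cases hb : b = j'
    · exact ha.trans hb.symm
    · rw [if_pos ha, if_neg hb] at h; exact absurd h (hvne b)
    · rw [if_neg ha, if_pos hb] at h; exact absurd h.symm (hvne a)
    · rw [if_neg ha, if_neg hb] at h; exact hbaseinj h
  · -- V_σ Y = C
    have hCnonneg : (0:ℝ) ≤ C := Finset.sum_nonneg fun j _ => norm_nonneg _
    have hVσ : ∑ j, ‖Y j - Y (σ j)‖ = C := by
      rw [hC]
      apply Finset.sum_congr rfl
      intro j _
      by_cases hj : j = j'
      · subst hj
        rw [hσ]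
        simp
      · have hσj : σ j ≠ j' := fun h => hj (σ.injective (h.trans hσ.symm))
        simp only [Y, if_neg hj, if_neg hσj]
    -- lower bound for V_σ'
    have hterm : t - N ≤ ‖Y j' - Y (σ' j')‖ := by
      have hne : σ' j' ≠ j' := hσ'
      have : Y (σ' j') = base (σ' j') := if_neg hne
      rw [hYj', this]
      have h0 : (v - base (σ' j')) 0 = t - (σ' j' : ℝ) := by
        simp [v, base, EuclideanSpace.single_apply]
      calc t - N ≤ t - (σ' j' : ℝ) := by
            have : ((σ' j' : ℕ) : ℝ) ≤ N := by exact_mod_cast (σ' j').2.le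
            linarith
        _ ≤ |t - (σ' j' : ℝ)| := le_abs_self _
        _ = |(v - base (σ' j')) 0| := by rw [h0]
        _ ≤ ‖v - base (σ' j')‖ := abs_coord_le_norm _ _
    have hVσ' : C < ∑ j, ‖Y j - Y (σ' j)‖ := by
      have hle : ‖Y j' - Y (σ' j')‖ ≤ ∑ j, ‖Y j - Y (σ' j)‖ :=
        Finset.single_le_sum (f := fun j => ‖Y j - Y (σ' j)‖)
          (fun j _ => norm_nonneg _) (Finset.mem_univ j')
      have : C < t - N := by rw [ht]; linarith
      linarith
    rw [hVσ]; exact ne_of_lt hVσ'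
end

section
/- For σ, σ' ∈ S_N: V_σ(Y) = V_{σ'}(Y) holds for all N-tuples Y of distinct points in ℝ³ if and only if σ and σ' are edge-equivalent (the multisets of unordered pairs {{j, σ(j)} : j} and {{j, σ'(j)} : j} coincide). -/
open Finset

namespace VEqAux

variable {N : ℕ}

/-- The one-dimensional test configuration: point `a` at `t`, point `b` at `0`,
all other points `k` at `k + 2`. -/
noncomputable def xx (a b : Fin N) (t : ℝ) (k : Fin N) : ℝ :=
  if k = a then t else if k = b then 0 else ((k : ℕ) : ℝ) + 2

lemma xx_a (a b : Fin N) (t : ℝ) : xx a b t a = t := by simp [xx]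

lemma xx_b (a b : Fin N) (hab : a ≠ b) (t : ℝ) : xx a b t b = 0 := by
  simp [xx, Ne.symm hab]

lemma xx_o (a b : Fin N) {k : Fin N} (h1 : k ≠ a) (h2 : k ≠ b) (t : ℝ) :
    xx a b t k = ((k : ℕ) : ℝ) + 2 := by simp [xx, h1, h2]

lemma xx_inj (a b : Fin N) (hab : a ≠ b) {t : ℝ} (ht0 : t ≠ 0) (ht1 : |t| < 1) :
    Function.Injective (xx a b t) := by
  have hbig : ∀ k : Fin N, (0 : ℝ) ≤ ((k : ℕ) : ℝ) := fun k => Nat.cast_nonneg _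
  have ht1' : t < 1 := (abs_lt.mp ht1).2
  intro i j hij
  by_cases hia : i = a
  · by_cases hja : j = a
    · rw [hia, hja]
    · exfalso
      by_cases hjb : j = b
      · rw [hia, hjb, xx_a, xx_b a b hab] at hij
        exact ht0 hij
      · rw [hia, xx_a, xx_o a b hja hjb] at hij
        have := hbig j
        linarith
  · by_cases hib : i = b
    · by_cases hja : j = a
      · exfalso
        rw [hib, hja, xx_a, xx_b a b hab] at hij
        exact ht0 hij.symm
      · by_cases hjb : j = b
        · rw [hib, hjb]
        · exfalso
          rw [hib, xx_b a b hab, xx_o a b hja hjb] at hij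
          have := hbig j
          linarith
    · by_cases hja : j = a
      · exfalso
        rw [hja, xx_a, xx_o a b hia hib] at hij
        have := hbig i
        linarith
      · by_cases hjb : j = b
        · exfalso
          rw [hjb, xx_b a b hab, xx_o a b hia hib] at hij
          have := hbig i
          linarith
        · rw [xx_o a b hia hib, xx_o a b hja hjb] at hij
          have : (i : ℕ) = (j : ℕ) := by exact_mod_cast (by linarith : ((i:ℕ):ℝ) = ((j:ℕ):ℝ))
          exact Fin.ext this

/-- The 4-point evaluation of a single term detects exactly the pair `s(a,b)`. -/
lemma term_eval (a b : Fin N) (hab : a ≠ b) (j u : Fin N) :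
    |xx a b (1/2) j - xx a b (1/2) u| + |xx a b (-(1/2)) j - xx a b (-(1/2)) u|
      - |xx a b (1/4) j - xx a b (1/4) u| - |xx a b (-(1/4)) j - xx a b (-(1/4)) u|
    = if s(j, u) = s(a, b) then (1/2 : ℝ) else 0 := by
  by_cases hja : j = a
  · by_cases hua : u = a
    · -- (a, a)
      rw [hja, hua]
      rw [if_neg (fun hcon => by
        rcases Sym2.eq_iff.mp hcon with ⟨_, h2⟩ | ⟨h1, _⟩
        exacts [hab h2, hab h1])]
      simp only [xx_a]
      norm_num
    · by_cases hub : u = b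
      · -- (a, b)
        rw [hja, hub]
        rw [if_pos (Sym2.eq_iff.mpr (Or.inl ⟨rfl, rfl⟩))]
        simp only [xx_a, xx_b a b hab]
        norm_num [abs_of_pos]
      · -- (a, other)
        rw [hja]
        rw [if_neg (fun hcon => by
          rcases Sym2.eq_iff.mp hcon with ⟨_, h2⟩ | ⟨h1, _⟩
          exacts [hub h2, hab h1])]
        simp only [xx_a, xx_o a b hua hub]
        have h0 : (0 : ℝ) ≤ ((u : ℕ) : ℝ) := Nat.cast_nonneg _
        have habs : ∀ s : ℝ, s ≤ 1 → |s - (((u:ℕ):ℝ) + 2)| = ((u:ℕ):ℝ) + 2 - s := by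
          intro s hs
          rw [abs_of_nonpos (by linarith)]; ring
        rw [habs _ (by norm_num), habs _ (by norm_num), habs _ (by norm_num),
          habs _ (by norm_num)]
        ring
  · by_cases hjb : j = b
    · by_cases hua : u = a
      · -- (b, a)
        rw [hjb, hua]
        rw [if_pos (Sym2.eq_iff.mpr (Or.inr ⟨rfl, rfl⟩))]
        simp only [xx_a, xx_b a b hab]
        norm_num [abs_of_pos]
      · by_cases hub : u = b
        · -- (b, b)
          rw [hjb, hub]
          rw [if_neg (fun hcon => by
            rcases Sym2.eq_iff.mp hcon with ⟨h1, _⟩ | ⟨_, h2⟩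
            exacts [hab h1.symm, hab h2.symm])]
          simp only [xx_b a b hab]
          norm_num
        · -- (b, other)
          rw [hjb]
          rw [if_neg (fun hcon => by
            rcases Sym2.eq_iff.mp hcon with ⟨h1, _⟩ | ⟨_, h2⟩
            exacts [hab h1.symm, hua h2])]
          simp only [xx_b a b hab, xx_o a b hua hub]
          ring
    · by_cases hua : u = a
      · -- (other, a)
        rw [hua]
        rw [if_neg (fun hcon => by
          rcases Sym2.eq_iff.mp hcon with ⟨h1, _⟩ | ⟨h1, _⟩
          exacts [hja h1, hjb h1])]
        simp only [xx_a, xx_o a b hja hjb]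
        have h0 : (0 : ℝ) ≤ ((j : ℕ) : ℝ) := Nat.cast_nonneg _
        have habs : ∀ s : ℝ, s ≤ 1 → |(((j:ℕ):ℝ) + 2) - s| = ((j:ℕ):ℝ) + 2 - s := by
          intro s hs
          rw [abs_of_nonneg (by linarith)]
        rw [habs _ (by norm_num), habs _ (by norm_num), habs _ (by norm_num),
          habs _ (by norm_num)]
        ring
      · by_cases hub : u = b
        · -- (other, b)
          rw [hub]
          rw [if_neg (fun hcon => by
            rcases Sym2.eq_iff.mp hcon with ⟨h1, _⟩ | ⟨h1, _⟩
            exacts [hja h1, hjb h1])]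
          simp only [xx_b a b hab, xx_o a b hja hjb]
          ring
        · -- (other, other)
          rw [if_neg (fun hcon => by
            rcases Sym2.eq_iff.mp hcon with ⟨h1, _⟩ | ⟨h1, _⟩
            exacts [hja h1, hjb h1])]
          simp only [xx_o a b hja hjb, xx_o a b hua hub]
          ring

/-- Summing the 4-point evaluation over all `j` computes the multiset count. -/
lemma sum_eval (σ : Equiv.Perm (Fin N)) (a b : Fin N) (hab : a ≠ b) :
    (∑ j, |xx a b (1/2) j - xx a b (1/2) (σ j)|)
      + (∑ j, |xx a b (-(1/2)) j - xx a b (-(1/2)) (σ j)|)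
      - (∑ j, |xx a b (1/4) j - xx a b (1/4) (σ j)|)
      - (∑ j, |xx a b (-(1/4)) j - xx a b (-(1/4)) (σ j)|)
    = ((Multiset.count s(a, b) (Finset.univ.val.map fun j : Fin N => s(j, σ j)) : ℕ) : ℝ) / 2 := by
  rw [← Finset.sum_add_distrib, ← Finset.sum_sub_distrib, ← Finset.sum_sub_distrib]
  rw [Finset.sum_congr rfl fun j _ => term_eval a b hab j (σ j)]
  rw [← Finset.sum_filter, Finset.sum_const, nsmul_eq_mul]
  rw [Multiset.count_map]
  have : Multiset.filter (fun j => s(a, b) = s(j, σ j)) Finset.univ.val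
      = (Finset.univ.filter (fun j => s(j, σ j) = s(a, b))).val := by
    rw [Finset.filter_val]
    exact Multiset.filter_congr fun j _ => ⟨fun h => h.symm, fun h => h.symm⟩
  rw [this, ← Finset.card_def]
  ring

end VEqAux

open VEqAux in
/-- V_σ(Y) = V_{σ'}(Y) holds for all N-tuples Y of distinct points in ℝ³ if and
only if σ and σ' are edge-equivalent (their multisets of unordered pairs
{j, σ(j)} coincide). -/
theorem V_eq_forall_iff_edgeEquiv (N : ℕ) (σ σ' : Equiv.Perm (Fin N)) :
    (∀ Y : Fin N → EuclideanSpace ℝ (Fin 3), Function.Injective Y →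
        ∑ j, ‖Y j - Y (σ j)‖ = ∑ j, ‖Y j - Y (σ' j)‖) ↔
      (Finset.univ.val.map fun j : Fin N => s(j, σ j)) =
        (Finset.univ.val.map fun j : Fin N => s(j, σ' j)) := by
  constructor
  · intro H
    set e : EuclideanSpace ℝ (Fin 3) := EuclideanSpace.single 0 1 with he
    have he1 : ‖e‖ = 1 := by rw [he, EuclideanSpace.norm_single]; norm_num
    have hnorm : ∀ r s : ℝ, ‖r • e - s • e‖ = |r - s| := by
      intro r s
      rw [← sub_smul, norm_smul, he1, mul_one, Real.norm_eq_abs]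
    -- the hypothesis at the test configurations, in terms of absolute values
    have key : ∀ (a b : Fin N), a ≠ b → ∀ t : ℝ, t ≠ 0 → |t| < 1 →
        (∑ j, |xx a b t j - xx a b t (σ j)|) = ∑ j, |xx a b t j - xx a b t (σ' j)| := by
      intro a b hab t ht0 ht1
      have hY : Function.Injective (fun k => xx a b t k • e) := by
        intro i j hij
        have hij' : xx a b t i • e = xx a b t j • e := hij
        apply xx_inj a b hab ht0 ht1
        have h0 : |xx a b t i - xx a b t j| = 0 := by
          rw [← hnorm, hij', sub_self, norm_zero]
        exact sub_eq_zero.mp (abs_eq_zero.mp h0)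
      have := H (fun k => xx a b t k • e) hY
      simpa only [hnorm] using this
    -- off-diagonal counts agree
    have hcount : ∀ a b : Fin N, a ≠ b →
        Multiset.count s(a, b) (Finset.univ.val.map fun j : Fin N => s(j, σ j))
          = Multiset.count s(a, b) (Finset.univ.val.map fun j : Fin N => s(j, σ' j)) := by
      intro a b hab
      have e1 := key a b hab (1/2) (by norm_num) (by rw [abs_of_pos] <;> norm_num)
      have e2 := key a b hab (-(1/2)) (by norm_num) (by rw [abs_of_neg] <;> norm_num)
      have e3 := key a b hab (1/4) (by norm_num) (by rw [abs_of_pos] <;> norm_num)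
      have e4 := key a b hab (-(1/4)) (by norm_num) (by rw [abs_of_neg] <;> norm_num)
      have hs := sum_eval σ a b hab
      have hs' := sum_eval σ' a b hab
      rw [e1, e2, e3, e4, hs'] at hs
      have : ((Multiset.count s(a, b) (Finset.univ.val.map fun j : Fin N => s(j, σ j)) : ℕ) : ℝ)
          = ((Multiset.count s(a, b) (Finset.univ.val.map fun j : Fin N => s(j, σ' j)) : ℕ) : ℝ) := by
        linarith
      exact_mod_cast this
    -- fixed points agree
    have hfix_aux : ∀ (τ τ' : Equiv.Perm (Fin N)),
        (∀ a b : Fin N, a ≠ b →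
          Multiset.count s(a, b) (Finset.univ.val.map fun j : Fin N => s(j, τ j))
            = Multiset.count s(a, b) (Finset.univ.val.map fun j : Fin N => s(j, τ' j))) →
        ∀ a : Fin N, τ a ≠ a → τ' a ≠ a := by
      intro τ τ' hc a ha
      have hmem : s(a, τ a) ∈ Finset.univ.val.map fun j : Fin N => s(j, τ j) :=
        Multiset.mem_map.mpr ⟨a, by simp, rfl⟩
      have hpos : 0 < Multiset.count s(a, τ a) (Finset.univ.val.map fun j : Fin N => s(j, τ j)) :=
        Multiset.count_pos.mpr hmem
      rw [hc a (τ a) (fun h => ha h.symm)] at hpos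
      obtain ⟨j, -, hj⟩ := Multiset.mem_map.mp (Multiset.count_pos.mp hpos)
      rcases Sym2.eq_iff.mp hj with ⟨h1, h2⟩ | ⟨h1, h2⟩
      · rw [h1] at h2; rw [h2]; exact ha
      · intro hfixa
        rw [h1] at h2
        exact ha (τ'.injective (h2.trans hfixa.symm))
    have hfix : ∀ a : Fin N, σ a = a ↔ σ' a = a := by
      intro a
      constructor
      · intro h
        by_contra h'
        exact (hfix_aux σ' σ (fun a b hab => (hcount a b hab).symm) a h') h
      · intro h
        by_contra h'
        exact (hfix_aux σ σ' hcount a h') h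
    -- conclude multiset equality via counts
    rw [Multiset.ext]
    intro p
    induction p using Sym2.ind with
    | _ a b =>
      by_cases hab : a = b
      · subst hab
        rw [Multiset.count_map, Multiset.count_map]
        congr 1
        apply Multiset.filter_congr
        intro j _
        constructor
        · intro h
          rcases Sym2.eq_iff.mp h.symm with ⟨h1, h2⟩ | ⟨h1, h2⟩ <;>
          · rw [h1] at h2 ⊢
            rw [(hfix a).mp h2]
        · intro h
          rcases Sym2.eq_iff.mp h.symm with ⟨h1, h2⟩ | ⟨h1, h2⟩ <;>
          · rw [h1] at h2 ⊢
            rw [(hfix a).mpr h2]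
      · exact hcount a b hab
  · intro h Y _
    set F : Sym2 (Fin N) → ℝ :=
      Sym2.lift ⟨fun i j => ‖Y i - Y j‖, fun i j => norm_sub_rev (Y i) (Y j)⟩ with hF
    have hFs : ∀ i j : Fin N, ‖Y i - Y j‖ = F s(i, j) := by
      intro i j; rw [hF, Sym2.lift_mk]
    calc ∑ j, ‖Y j - Y (σ j)‖
        = ∑ j, F s(j, σ j) := Finset.sum_congr rfl fun j _ => hFs j (σ j)
      _ = ((Finset.univ.val.map fun j : Fin N => s(j, σ j)).map F).sum := by
          rw [Multiset.map_map, Finset.sum_eq_multiset_sum]; rfl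
      _ = ((Finset.univ.val.map fun j : Fin N => s(j, σ' j)).map F).sum := by rw [h]
      _ = ∑ j, F s(j, σ' j) := by
          rw [Multiset.map_map, Finset.sum_eq_multiset_sum]; rfl
      _ = ∑ j, ‖Y j - Y (σ' j)‖ := Finset.sum_congr rfl fun j _ => (hFs j (σ' j)).symm
end

section
/- There exists a subset 𝔸₁ of 𝔸 = {N-tuples of distinct points in ℝ³}, open and dense in 𝔸, such that for every Y ∈ 𝔸₁ and all σ, σ' ∈ S_N: V_σ(Y) = V_{σ'}(Y) implies σ and σ' are edge-equivalent. -/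
open Filter Topology

section Aux

theorem myAnalyticAt_sqrt {t : ℝ} (ht : 0 < t) : AnalyticAt ℝ Real.sqrt t := by
  have h1 : AnalyticAt ℂ (fun z : ℂ => z ^ (1/2 : ℂ)) (t : ℂ) :=
    analyticAt_id.cpow analyticAt_const (by simp [Complex.mem_slitPlane_iff, ht])
  have h2 : AnalyticAt ℝ (fun z : ℂ => z ^ (1/2 : ℂ)) (t : ℂ) := by
    rcases h1 with ⟨p, hp⟩
    exact ⟨p.restrictScalars ℝ, hp.restrictScalars⟩
  have h3 : AnalyticAt ℝ (fun s : ℝ => (((s : ℂ)) ^ (1/2 : ℂ)).re) t :=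
    (Complex.reCLM.analyticAt _).comp (h2.comp (Complex.ofRealCLM.analyticAt _))
  apply h3.congr
  filter_upwards [eventually_gt_nhds ht] with s hs
  have : ((Real.sqrt s : ℝ) : ℂ) = (s : ℂ) ^ (1/2 : ℂ) := by
    rw [Real.sqrt_eq_rpow, Complex.ofReal_cpow hs.le]
    norm_num
  rw [← this, Complex.ofReal_re]

theorem myAnalyticAt_norm {E : Type*} [NormedAddCommGroup E] [InnerProductSpace ℝ E]
    {x : E} (hx : x ≠ 0) : AnalyticAt ℝ (fun y : E => ‖y‖) x := by
  have hdiag : AnalyticAt ℝ (fun y : E => (y, y)) x := analyticAt_id.prod analyticAt_id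
  have hinner := AnalyticAt.comp (f := fun y : E => (y, y))
    ((innerSL ℝ (E := E)).analyticAt_bilinear (x, x)) hdiag
  have hpos : (0:ℝ) < inner ℝ x x := by
    rw [real_inner_self_eq_norm_sq]
    exact pow_pos (norm_pos_iff.2 hx) 2
  have h2 := AnalyticAt.comp (f := fun y : E =>
      ((fun p : E × E => (innerSL ℝ (E := E)) p.1 p.2) ∘ fun y : E => (y, y)) y)
    (myAnalyticAt_sqrt hpos) hinner
  apply h2.congr
  filter_upwards with y
  simp only [Function.comp, innerSL_apply_apply]
  rw [real_inner_self_eq_norm_sq, Real.sqrt_sq (norm_nonneg _)]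

/-- count of the edge `{a,b}` in the edge multiset of `σ`. -/
def myCnt {N : ℕ} (σ : Equiv.Perm (Fin N)) (a b : Fin N) : ℕ :=
  (if σ a = b then 1 else 0) + (if σ b = a then 1 else 0)

theorem myCount_edge {N : ℕ} (σ : Equiv.Perm (Fin N)) (a b : Fin N) :
    Multiset.count s(a,b) (Finset.univ.val.map fun j : Fin N => s(j, σ j)) =
      if a = b then (if σ a = a then 1 else 0) else myCnt σ a b := by
  classical
  rw [Multiset.count_map, ← Finset.filter_val, Finset.card_val]
  by_cases hab : a = b
  · subst hab
    rw [if_pos rfl]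
    have : (Finset.univ.filter fun j : Fin N => s(a,a) = s(j, σ j)) =
        Finset.univ.filter fun j : Fin N => j = a ∧ σ a = a := by
      apply Finset.filter_congr
      intro j _
      simp only [Sym2.eq_iff]
      constructor
      · rintro (⟨h1, h2⟩ | ⟨h1, h2⟩)
        · exact ⟨h1.symm, by rw [← h1] at h2; exact h2.symm⟩
        · exact ⟨h2.symm, by rw [← h2] at h1; exact h1.symm⟩
      · rintro ⟨h1, h2⟩; subst h1; exact Or.inl ⟨rfl, h2.symm⟩
    rw [this]
    by_cases hfix : σ a = a
    · rw [if_pos hfix]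
      simp [hfix, Finset.filter_eq']
    · rw [if_neg hfix]
      simp [hfix]
  · rw [if_neg hab]
    have : (Finset.univ.filter fun j : Fin N => s(a,b) = s(j, σ j)) =
        Finset.univ.filter fun j : Fin N => (j = a ∧ σ a = b) ∨ (j = b ∧ σ b = a) := by
      apply Finset.filter_congr
      intro j _
      simp only [Sym2.eq_iff]
      constructor
      · rintro (⟨h1, h2⟩ | ⟨h1, h2⟩)
        · exact Or.inl ⟨h1.symm, by rw [← h1] at h2; exact h2.symm⟩
        · exact Or.inr ⟨h2.symm, by rw [← h2] at h1; exact h1.symm⟩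
      · rintro (⟨h1, h2⟩ | ⟨h1, h2⟩)
        · subst h1; exact Or.inl ⟨rfl, h2.symm⟩
        · subst h1; exact Or.inr ⟨h2.symm, rfl⟩
    rw [this, Finset.filter_or]
    rw [Finset.card_union_of_disjoint]
    · unfold myCnt
      congr 1
      · by_cases h : σ a = b <;> simp [h, Finset.filter_eq']
      · by_cases h : σ b = a <;> simp [h, Finset.filter_eq']
    · rw [Finset.disjoint_filter]
      rintro j _ ⟨h1, _⟩ ⟨h2, _⟩
      exact hab (h1 ▸ h2 ▸ rfl)

theorem myCnt_exists {N : ℕ} {σ σ' : Equiv.Perm (Fin N)}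
    (h : (Finset.univ.val.map fun j : Fin N => s(j, σ j)) ≠
         (Finset.univ.val.map fun j : Fin N => s(j, σ' j))) :
    ∃ j k : Fin N, j ≠ k ∧ myCnt σ j k ≠ myCnt σ' j k := by
  classical
  by_contra hc
  push_neg at hc
  apply h
  have hcnt : ∀ j k : Fin N, j ≠ k → myCnt σ j k = myCnt σ' j k := by
    intro j k hjk
    by_contra hne
    exact hne (by by_contra hne2; exact hne2 (by exact (hc j k hjk)))
  have haux : ∀ (τ τ' : Equiv.Perm (Fin N)),
      (∀ j k : Fin N, j ≠ k → myCnt τ j k = myCnt τ' j k) → ∀ a, τ a = a → τ' a = a := by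
    intro τ τ' hcc a ha
    by_contra hb
    have hba : τ' a ≠ a := hb
    have h1 : myCnt τ' a (τ' a) ≠ 0 := by
      unfold myCnt; simp
    have h2 : myCnt τ a (τ' a) = 0 := by
      unfold myCnt
      rw [if_neg, if_neg, add_zero]
      · intro hh
        exact hba (τ.injective (by rw [ha, hh]))
      · rw [ha]; exact fun hh => hba hh.symm
    rw [← hcc a (τ' a) (fun hh => hba hh.symm), h2] at h1
    exact h1 rfl
  have hfix : ∀ a, σ a = a ↔ σ' a = a := fun a =>
    ⟨haux σ σ' hcnt a, haux σ' σ (fun j k hjk => (hcnt j k hjk).symm) a⟩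
  apply Multiset.ext.2
  intro e
  induction e using Sym2.inductionOn with
  | hf a b =>
    rw [myCount_edge, myCount_edge]
    by_cases hab : a = b
    · subst hab
      rw [if_pos rfl, if_pos rfl]
      by_cases hfa : σ a = a
      · rw [if_pos hfa, if_pos ((hfix a).1 hfa)]
      · rw [if_neg hfa, if_neg (fun hh => hfa ((hfix a).2 hh))]
    · rw [if_neg hab, if_neg hab]
      exact hcnt a b hab


theorem myUpdate_continuous {N : ℕ} (Y₀ : Fin N → EuclideanSpace ℝ (Fin 3)) (j : Fin N) :
    Continuous fun x : EuclideanSpace ℝ (Fin 3) => Function.update Y₀ j x := by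
  apply continuous_pi
  intro i
  by_cases h : i = j
  · exact continuous_id.congr fun x => by simp [Function.update_apply, h]
  · simpa [Function.update_apply, h] using continuous_const (y := Y₀ i)

theorem myDense {N : ℕ} (σ σ' : Equiv.Perm (Fin N))
    (hms : (Finset.univ.val.map fun j : Fin N => s(j, σ j)) ≠
           (Finset.univ.val.map fun j : Fin N => s(j, σ' j)))
    (U : Set (Fin N → EuclideanSpace ℝ (Fin 3))) (hU : IsOpen U)
    (Y₀ : Fin N → EuclideanSpace ℝ (Fin 3)) (hY₀U : Y₀ ∈ U)
    (hY₀ : Function.Injective Y₀) :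
    ∃ Y ∈ U, Function.Injective Y ∧
      (∑ i, ‖Y i - Y (σ i)‖) ≠ (∑ i, ‖Y i - Y (σ' i)‖) := by
  classical
  by_contra hcon
  push_neg at hcon
  obtain ⟨j, k, hjk, hcnt⟩ := myCnt_exists hms
  set upd : EuclideanSpace ℝ (Fin 3) → (Fin N → EuclideanSpace ℝ (Fin 3)) :=
    fun x => Function.update Y₀ j x with hupd
  set g : EuclideanSpace ℝ (Fin 3) → ℝ :=
    fun x => (∑ i, ‖upd x i - upd x (σ i)‖) - ∑ i, ‖upd x i - upd x (σ' i)‖ with hg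
  set Ω : Set (EuclideanSpace ℝ (Fin 3)) := (Y₀ '' {m | m ≠ j})ᶜ with hΩdef
  have hfin : (Y₀ '' {m | m ≠ j}).Finite := (Set.toFinite _).image Y₀
  have hΩopen : IsOpen Ω := hfin.isClosed.isOpen_compl
  have hΩmem : ∀ x : EuclideanSpace ℝ (Fin 3), x ∈ Ω ↔ ∀ m, m ≠ j → x ≠ Y₀ m := by
    intro x
    simp only [hΩdef, Set.mem_compl_iff, Set.mem_image, Set.mem_setOf_eq, not_exists, not_and]
    constructor
    · intro h m hm he
      exact h m hm he.symm
    · intro h m hm he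
      exact h m hm he.symm
  have hrank : 1 < Module.rank ℝ (EuclideanSpace ℝ (Fin 3)) := by
    rw [← Module.finrank_eq_rank, finrank_euclideanSpace_fin]
    exact_mod_cast (by norm_num : (1:ℕ) < 3)
  have hΩconn : IsPreconnected Ω :=
    (hfin.countable.isPathConnected_compl_of_one_lt_rank hrank).isConnected.isPreconnected
  have hupd_inj : ∀ x, x ∈ Ω → Function.Injective (upd x) := by
    intro x hx a b hab
    simp only [hupd, Function.update_apply] at hab
    by_cases ha : a = j <;> by_cases hb : b = j
    · rw [ha, hb]
    · rw [if_pos ha, if_neg hb] at hab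
      exact absurd hab ((hΩmem x).1 hx b hb)
    · rw [if_neg ha, if_pos hb] at hab
      exact absurd hab.symm ((hΩmem x).1 hx a ha)
    · rw [if_neg ha, if_neg hb] at hab
      exact hY₀ hab
  -- analyticity of each term
  have hterm : ∀ (τ : Equiv.Perm (Fin N)) (i : Fin N) (x : EuclideanSpace ℝ (Fin 3)), x ∈ Ω →
      AnalyticAt ℝ (fun y => ‖upd y i - upd y (τ i)‖) x := by
    intro τ i x hx
    by_cases hij : i = j
    · subst hij
      by_cases hτ : τ i = i
      · have heq : (fun y : EuclideanSpace ℝ (Fin 3) => ‖upd y i - upd y (τ i)‖) =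
            fun _ => (0:ℝ) := by
          funext y
          simp [hupd, Function.update_apply, hτ]
        rw [heq]; exact analyticAt_const
      · have heq : (fun y : EuclideanSpace ℝ (Fin 3) => ‖upd y i - upd y (τ i)‖) =
            fun y => ‖y - Y₀ (τ i)‖ := by
          funext y
          simp [hupd, Function.update_apply, hτ]
        rw [heq]
        have h0 : x - Y₀ (τ i) ≠ 0 := sub_ne_zero.2 ((hΩmem x).1 hx _ hτ)
        exact AnalyticAt.comp (f := fun y : EuclideanSpace ℝ (Fin 3) => y - Y₀ (τ i))
          (myAnalyticAt_norm h0) (analyticAt_id.sub analyticAt_const)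
    · by_cases hτ : τ i = j
      · have heq : (fun y : EuclideanSpace ℝ (Fin 3) => ‖upd y i - upd y (τ i)‖) =
            fun y => ‖Y₀ i - y‖ := by
          funext y
          simp [hupd, Function.update_apply, hij, hτ]
        rw [heq]
        have h0 : Y₀ i - x ≠ 0 := sub_ne_zero.2 fun he => (hΩmem x).1 hx i hij he.symm
        exact AnalyticAt.comp (f := fun y : EuclideanSpace ℝ (Fin 3) => Y₀ i - y)
          (myAnalyticAt_norm h0) (analyticAt_const.sub analyticAt_id)
      · have heq : (fun y : EuclideanSpace ℝ (Fin 3) => ‖upd y i - upd y (τ i)‖) =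
            fun _ => ‖Y₀ i - Y₀ (τ i)‖ := by
          funext y
          simp [hupd, Function.update_apply, hij, hτ]
        rw [heq]; exact analyticAt_const
  have hganal : AnalyticOnNhd ℝ g Ω := by
    intro x hx
    exact (Finset.analyticAt_fun_sum _ fun i _ => hterm σ i x hx).sub
      (Finset.analyticAt_fun_sum _ fun i _ => hterm σ' i x hx)
  -- g vanishes near Y₀ j
  have hWopen : IsOpen {x : EuclideanSpace ℝ (Fin 3) | upd x ∈ U} :=
    hU.preimage (myUpdate_continuous Y₀ j)
  have hY₀jΩ : Y₀ j ∈ Ω := (hΩmem _).2 fun m hm he => hm (hY₀ he.symm)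
  have hWj : Y₀ j ∈ {x : EuclideanSpace ℝ (Fin 3) | upd x ∈ U} ∩ Ω := by
    refine ⟨?_, hY₀jΩ⟩
    show upd (Y₀ j) ∈ U
    rw [hupd]
    simpa [Function.update_eq_self] using hY₀U
  have hev0 : g =ᶠ[𝓝 (Y₀ j)] 0 := by
    have hmem : ({x : EuclideanSpace ℝ (Fin 3) | upd x ∈ U} ∩ Ω) ∈ 𝓝 (Y₀ j) :=
      (hWopen.inter hΩopen).mem_nhds hWj
    filter_upwards [hmem] with x hx
    have := hcon (upd x) hx.1 (hupd_inj x hx.2)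
    show g x = 0
    rw [hg]
    exact sub_eq_zero.2 this
  have hEqOn : Set.EqOn g 0 Ω :=
    hganal.eqOn_zero_of_preconnected_of_eventuallyEq_zero hΩconn hY₀jΩ hev0
  -- now the contradiction at Y₀ k
  set c : ℝ := (myCnt σ j k : ℝ) - (myCnt σ' j k : ℝ) with hcdef
  have hcne : c ≠ 0 := sub_ne_zero.2 fun hh => hcnt (Nat.cast_injective hh)
  set e : Equiv.Perm (Fin N) → Fin N → ℝ :=
    fun τ i => if (i = j ∧ τ i = k) ∨ (i = k ∧ τ i = j) then 1 else 0 with hedef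
  have hesum : ∀ τ : Equiv.Perm (Fin N), (∑ i, e τ i) = (myCnt τ j k : ℝ) := by
    intro τ
    have hpt : ∀ i, e τ i = (if i = j then (if τ j = k then (1:ℝ) else 0) else 0) +
        (if i = k then (if τ k = j then (1:ℝ) else 0) else 0) := by
      intro i
      by_cases hij : i = j <;> by_cases hik : i = k
      · exact absurd (hij ▸ hik) (by simp [hjk, hij])
      · subst hij; simp [hedef, hik, fun hh : τ i = k => hh]
      · subst hik; simp [hedef, hij, Ne.symm hjk]
      · simp [hedef, hij, hik]
    rw [Finset.sum_congr rfl fun i _ => hpt i, Finset.sum_add_distrib]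
    rw [Finset.sum_ite_eq' Finset.univ j fun _ => if τ j = k then (1:ℝ) else 0]
    rw [Finset.sum_ite_eq' Finset.univ k fun _ => if τ k = j then (1:ℝ) else 0]
    simp [myCnt, apply_ite (Nat.cast : ℕ → ℝ)]
  set h : EuclideanSpace ℝ (Fin 3) → ℝ := fun x => g x - c * ‖x - Y₀ k‖ with hhdef
  have hdterm : ∀ (τ : Equiv.Perm (Fin N)) (i : Fin N),
      DifferentiableAt ℝ (fun x => ‖upd x i - upd x (τ i)‖ - e τ i * ‖x - Y₀ k‖) (Y₀ k) := by
    intro τ i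
    by_cases hij : i = j
    · subst hij
      by_cases h1 : τ i = i
      · have heq : (fun x : EuclideanSpace ℝ (Fin 3) =>
            ‖upd x i - upd x (τ i)‖ - e τ i * ‖x - Y₀ k‖) = fun _ => 0 := by
          funext x
          have : e τ i = 0 := by simp [hedef, h1, hjk, Ne.symm hjk]
          simp [hupd, Function.update_apply, h1, this]
        rw [heq]; exact differentiableAt_const 0
      · by_cases h2 : τ i = k
        · have heq : (fun x : EuclideanSpace ℝ (Fin 3) =>
              ‖upd x i - upd x (τ i)‖ - e τ i * ‖x - Y₀ k‖) = fun _ => 0 := by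
            funext x
            have he1 : e τ i = 1 := by
              rw [hedef]
              exact if_pos (Or.inl ⟨rfl, h2⟩)
            rw [he1, one_mul, hupd]
            show ‖Function.update Y₀ i x i - Function.update Y₀ i x (τ i)‖ - ‖x - Y₀ k‖ = 0
            rw [Function.update_apply, Function.update_apply, if_pos rfl, if_neg h1, h2, sub_self]
          rw [heq]; exact differentiableAt_const 0
        · have heq : (fun x : EuclideanSpace ℝ (Fin 3) =>
              ‖upd x i - upd x (τ i)‖ - e τ i * ‖x - Y₀ k‖) = fun x => ‖x - Y₀ (τ i)‖ := by
            funext x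
            have : e τ i = 0 := by simp [hedef, h1, h2, hjk]
            simp [hupd, Function.update_apply, h1, h2, this]
          rw [heq]
          have h0 : Y₀ k - Y₀ (τ i) ≠ 0 := sub_ne_zero.2 fun he => h2 (hY₀ he).symm
          exact (AnalyticAt.comp (f := fun y : EuclideanSpace ℝ (Fin 3) => y - Y₀ (τ i))
            (myAnalyticAt_norm h0) (analyticAt_id.sub analyticAt_const)).differentiableAt
    · by_cases h1 : τ i = j
      · by_cases h2 : i = k
        · have heq : (fun x : EuclideanSpace ℝ (Fin 3) =>
              ‖upd x i - upd x (τ i)‖ - e τ i * ‖x - Y₀ k‖) = fun _ => 0 := by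
            funext x
            have he1 : e τ i = 1 := by
              rw [hedef]
              exact if_pos (Or.inr ⟨h2, h1⟩)
            rw [he1, one_mul, hupd]
            show ‖Function.update Y₀ j x i - Function.update Y₀ j x (τ i)‖ - ‖x - Y₀ k‖ = 0
            rw [Function.update_apply, Function.update_apply, if_neg hij, if_pos h1, h2,
              norm_sub_rev, sub_self]
          rw [heq]; exact differentiableAt_const 0
        · have heq : (fun x : EuclideanSpace ℝ (Fin 3) =>
              ‖upd x i - upd x (τ i)‖ - e τ i * ‖x - Y₀ k‖) = fun x => ‖Y₀ i - x‖ := by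
            funext x
            have : e τ i = 0 := by simp [hedef, hij, h2]
            simp [hupd, Function.update_apply, hij, h1, this]
          rw [heq]
          have h0 : Y₀ i - Y₀ k ≠ 0 := sub_ne_zero.2 fun he => h2 (hY₀ he)
          exact (AnalyticAt.comp (f := fun y : EuclideanSpace ℝ (Fin 3) => Y₀ i - y)
            (myAnalyticAt_norm h0) (analyticAt_const.sub analyticAt_id)).differentiableAt
      · have heq : (fun x : EuclideanSpace ℝ (Fin 3) =>
            ‖upd x i - upd x (τ i)‖ - e τ i * ‖x - Y₀ k‖) = fun _ => ‖Y₀ i - Y₀ (τ i)‖ := by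
          funext x
          have : e τ i = 0 := by simp [hedef, hij, h1]
          simp [hupd, Function.update_apply, hij, h1, this]
        rw [heq]; exact differentiableAt_const _
  have hhdiff : DifferentiableAt ℝ h (Y₀ k) := by
    have heq : h = fun x => (∑ i, (‖upd x i - upd x (σ i)‖ - e σ i * ‖x - Y₀ k‖)) -
        (∑ i, (‖upd x i - upd x (σ' i)‖ - e σ' i * ‖x - Y₀ k‖)) := by
      funext x
      rw [hhdef]
      show g x - c * ‖x - Y₀ k‖ = _
      rw [Finset.sum_sub_distrib, Finset.sum_sub_distrib, ← Finset.sum_mul, ← Finset.sum_mul,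
        hesum, hesum, hg, hcdef]
      ring
    rw [heq]
    exact (DifferentiableAt.fun_sum fun i _ => hdterm σ i).sub
      (DifferentiableAt.fun_sum fun i _ => hdterm σ' i)
  -- the line through Y₀ k
  set v : EuclideanSpace ℝ (Fin 3) := EuclideanSpace.single (0 : Fin 3) (1:ℝ) with hvdef
  have hv1 : ‖v‖ = 1 := by simp [hvdef]
  have hvne : v ≠ 0 := by
    intro hh
    rw [hh, norm_zero] at hv1
    norm_num at hv1
  set q : ℝ → EuclideanSpace ℝ (Fin 3) := fun t => Y₀ k + t • v with hqdef
  have hq0 : q 0 = Y₀ k := by simp [hqdef]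
  have hqdiff : DifferentiableAt ℝ q 0 :=
    (differentiableAt_const (Y₀ k)).add (differentiableAt_id.smul_const v)
  -- small perturbations stay away from the other points
  have hfin2 : (Y₀ '' {m | m ≠ j ∧ m ≠ k}).Finite := (Set.toFinite _).image Y₀
  have hΩ2open : IsOpen (Y₀ '' {m | m ≠ j ∧ m ≠ k})ᶜ := hfin2.isClosed.isOpen_compl
  have hkmem : Y₀ k ∈ (Y₀ '' {m | m ≠ j ∧ m ≠ k})ᶜ := by
    rintro ⟨m, ⟨-, hmk⟩, hm⟩
    exact hmk (hY₀ hm)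
  have hΩsub : ∀ x : EuclideanSpace ℝ (Fin 3),
      x ∈ (Y₀ '' {m | m ≠ j ∧ m ≠ k})ᶜ → x ≠ Y₀ k → x ∈ Ω := by
    intro x hx hxk
    rw [hΩmem]
    intro m hmj he
    by_cases hmk : m = k
    · exact hxk (hmk ▸ he)
    · exact hx ⟨m, ⟨hmj, hmk⟩, he.symm⟩
  -- g vanishes at Y₀ k by continuity
  have hgcont : Continuous g := by
    have hc1 : ∀ τ : Equiv.Perm (Fin N),
        Continuous fun x : EuclideanSpace ℝ (Fin 3) => ∑ i, ‖upd x i - upd x (τ i)‖ := by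
      intro τ
      apply continuous_finset_sum
      intro i _
      apply Continuous.norm
      exact ((continuous_apply i).comp (myUpdate_continuous Y₀ j)).sub
        ((continuous_apply (τ i)).comp (myUpdate_continuous Y₀ j))
    rw [hg]
    exact (hc1 σ).sub (hc1 σ')
  have hgk0 : g (Y₀ k) = 0 := by
    haveI : Filter.NeBot (𝓝[≠] (Y₀ k)) := Module.punctured_nhds_neBot ℝ _ _
    have h1 : Filter.Tendsto g (𝓝[≠] (Y₀ k)) (𝓝 (g (Y₀ k))) :=
      (hgcont.continuousAt.continuousWithinAt (s := {Y₀ k}ᶜ)).tendsto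
    have h2 : Filter.Tendsto g (𝓝[≠] (Y₀ k)) (𝓝 0) := by
      apply Filter.Tendsto.congr' _ tendsto_const_nhds
      have hm2 : (Y₀ '' {m | m ≠ j ∧ m ≠ k})ᶜ ∈ 𝓝[≠] (Y₀ k) :=
        nhdsWithin_le_nhds (hΩ2open.mem_nhds hkmem)
      filter_upwards [hm2, self_mem_nhdsWithin] with x hx hx2
      exact (hEqOn (hΩsub x hx hx2)).symm
    exact tendsto_nhds_unique h1 h2
  -- the eventual equality with |t|
  have hkey : (fun t : ℝ => -(h (q t)) / c) =ᶠ[𝓝 (0:ℝ)] fun t => |t| := by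
    have hqev : ∀ᶠ t : ℝ in 𝓝 0, q t ∈ (Y₀ '' {m | m ≠ j ∧ m ≠ k})ᶜ := by
      have : Filter.Tendsto q (𝓝 0) (𝓝 (Y₀ k)) := by
        rw [← hq0]
        exact hqdiff.continuousAt.tendsto
      exact this.eventually (hΩ2open.eventually_mem hkmem)
    filter_upwards [hqev] with t ht
    by_cases ht0 : t = 0
    · subst ht0
      simp [hq0, hhdef, hgk0]
    · have hqtk : q t ≠ Y₀ k := by
        intro hh
        have hsub : t • v = 0 := by
          have : Y₀ k + t • v = Y₀ k := hh
          have h2 := congrArg (fun z => z - Y₀ k) this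
          simpa using h2
        exact smul_ne_zero ht0 hvne hsub
      have hqΩ : q t ∈ Ω := hΩsub _ ht hqtk
      have hgq : g (q t) = 0 := hEqOn hqΩ
      have hnorm : ‖q t - Y₀ k‖ = |t| := by
        rw [hqdef]
        simp [norm_smul, hv1, Real.norm_eq_abs]
      rw [hhdef]
      show -(g (q t) - c * ‖q t - Y₀ k‖) / c = |t|
      rw [hgq, hnorm]
      field_simp
      ring
  have habs : DifferentiableAt ℝ (fun t : ℝ => |t|) 0 := by
    have hφ : DifferentiableAt ℝ (fun t : ℝ => -(h (q t)) / c) 0 := by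
      have hh2 : DifferentiableAt ℝ h (q 0) := by rw [hq0]; exact hhdiff
      exact ((hh2.comp 0 hqdiff).neg).div_const c
    exact hφ.congr_of_eventuallyEq hkey.symm
  exact not_differentiableAt_abs_zero habs

end Aux

/-- There is a subset 𝔸₁ of 𝔸 = {N-tuples of distinct points in ℝ³}, open and dense
in 𝔸, such that for every Y ∈ 𝔸₁, permutations σ, σ' with V_σ(Y) = V_{σ'}(Y) are
edge-equivalent. -/
theorem exists_open_dense_generic_set (N : ℕ) :
    ∃ A₁ : Set (Fin N → EuclideanSpace ℝ (Fin 3)),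
      A₁ ⊆ {Y | Function.Injective Y} ∧
      IsOpen ((Subtype.val ⁻¹' A₁ :
        Set {Y : Fin N → EuclideanSpace ℝ (Fin 3) // Function.Injective Y})) ∧
      Dense ((Subtype.val ⁻¹' A₁ :
        Set {Y : Fin N → EuclideanSpace ℝ (Fin 3) // Function.Injective Y})) ∧
      ∀ Y ∈ A₁, ∀ σ σ' : Equiv.Perm (Fin N),
        (∑ j, ‖Y j - Y (σ j)‖ = ∑ j, ‖Y j - Y (σ' j)‖) →
          (Finset.univ.val.map fun j : Fin N => s(j, σ j)) =
            (Finset.univ.val.map fun j : Fin N => s(j, σ' j)) := by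
  classical
  set Sub := {Y : Fin N → EuclideanSpace ℝ (Fin 3) // Function.Injective Y} with hSub
  set A₁ : Set (Fin N → EuclideanSpace ℝ (Fin 3)) :=
    {Y | Function.Injective Y ∧ ∀ σ σ' : Equiv.Perm (Fin N),
      (Finset.univ.val.map fun j : Fin N => s(j, σ j)) ≠
        (Finset.univ.val.map fun j : Fin N => s(j, σ' j)) →
      (∑ j, ‖Y j - Y (σ j)‖) ≠ ∑ j, ‖Y j - Y (σ' j)‖} with hA₁
  set T : Equiv.Perm (Fin N) × Equiv.Perm (Fin N) → Set Sub := fun p =>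
    {y : Sub | (Finset.univ.val.map fun j : Fin N => s(j, p.1 j)) ≠
        (Finset.univ.val.map fun j : Fin N => s(j, p.2 j)) →
      (∑ j, ‖y.1 j - y.1 (p.1 j)‖) ≠ ∑ j, ‖y.1 j - y.1 (p.2 j)‖} with hT
  have hVcont : ∀ τ : Equiv.Perm (Fin N),
      Continuous fun y : Sub => ∑ i, ‖y.1 i - y.1 (τ i)‖ := by
    intro τ
    apply continuous_finset_sum
    intro i _
    exact (((continuous_apply i).comp continuous_subtype_val).sub
      ((continuous_apply (τ i)).comp continuous_subtype_val)).norm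
  have hTopen : ∀ p, IsOpen (T p) := by
    intro p
    by_cases hms : (Finset.univ.val.map fun j : Fin N => s(j, p.1 j)) =
        (Finset.univ.val.map fun j : Fin N => s(j, p.2 j))
    · have : T p = Set.univ := Set.eq_univ_of_forall fun y hne => absurd hms hne
      rw [this]
      exact isOpen_univ
    · have : T p = {y : Sub | (∑ j, ‖y.1 j - y.1 (p.1 j)‖) ≠ ∑ j, ‖y.1 j - y.1 (p.2 j)‖} := by
        ext y
        exact ⟨fun h => h hms, fun h _ => h⟩
      rw [this]
      exact isOpen_ne_fun (hVcont p.1) (hVcont p.2)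
  have hTdense : ∀ p, Dense (T p) := by
    intro p
    by_cases hms : (Finset.univ.val.map fun j : Fin N => s(j, p.1 j)) =
        (Finset.univ.val.map fun j : Fin N => s(j, p.2 j))
    · have : T p = Set.univ := Set.eq_univ_of_forall fun y hne => absurd hms hne
      rw [this]
      exact dense_univ
    · rw [dense_iff_inter_open]
      rintro u hu ⟨y₀, hy₀⟩
      obtain ⟨W, hW, rfl⟩ := isOpen_induced_iff.1 hu
      obtain ⟨Y, hYW, hYinj, hVne⟩ := myDense p.1 p.2 hms W hW y₀.1 hy₀ y₀.2
      exact ⟨⟨Y, hYinj⟩, hYW, fun _ => hVne⟩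
  have hpre : (Subtype.val ⁻¹' A₁ : Set Sub) = ⋂ p, T p := by
    ext y
    simp only [Set.mem_preimage, Set.mem_iInter, hA₁, hT, Set.mem_setOf_eq]
    constructor
    · rintro ⟨-, h2⟩ p
      exact h2 p.1 p.2
    · intro hp
      exact ⟨y.2, fun σ σ' => hp (σ, σ')⟩
  have hfinite : ∀ s : Finset (Equiv.Perm (Fin N) × Equiv.Perm (Fin N)),
      IsOpen (⋂ p ∈ s, T p) ∧ Dense (⋂ p ∈ s, T p) := by
    intro s
    induction s using Finset.induction with
    | empty => simp
    | @insert a s ha ih =>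
      rw [Finset.set_biInter_insert]
      exact ⟨(hTopen a).inter ih.1, (hTdense a).inter_of_isOpen_left ih.2 (hTopen a)⟩
  have hiInter : (⋂ p, T p) = ⋂ p ∈ (Finset.univ : Finset (Equiv.Perm (Fin N) × Equiv.Perm (Fin N))), T p := by
    simp
  refine ⟨A₁, fun Y hY => hY.1, ?_, ?_, ?_⟩
  · rw [hpre, hiInter]
    exact (hfinite Finset.univ).1
  · rw [hpre, hiInter]
    exact (hfinite Finset.univ).2
  · intro Y hY σ σ' hVeq
    by_contra hne
    exact hY.2 σ σ' hne hVeq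
end
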